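/- Let G be a group with a semilinear left preorder ≼, positive cone P, H = P ∩ P⁻¹, H̃ = ⋃_{p ∈ P} ⋂_{q⁻¹ ≼ p⁻¹} q⁻¹Hq. Then the quotient group G/H̃ is left-orderable, i.e., admits a total order invariant under left multiplication. -/

import Mathlib

section Stmt10Aux

variable {G : Type*} [Group G]

/-- Test functions: `f` with `f t ≼ t` for all `t`. -/
private def zzLam (r : G → G → Prop) := {f : G → G // ∀ t, r (f t) t}

private def zzAset (r : G → G → Prop) (f : zzLam r) (g h : G) : Set G :=
  {t | r (g * f.1 t) (h * f.1 t)}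

variable (r : G → G → Prop) (U : Ultrafilter G)

private def zzeqAt (f : zzLam r) (g h : G) : Prop :=
  zzAset r f g h ∈ U ∧ zzAset r f h g ∈ U

private def zzltAt (f : zzLam r) (g h : G) : Prop :=
  zzAset r f g h ∈ U ∧ zzAset r f h g ∉ U

private def zzsep (g h : G) : Set (zzLam r) := {f | ¬ zzeqAt r U f g h}

open Classical in
private noncomputable def zzF0 (hrefl : ∀ x, r x x) (g h : G) : zzLam r :=
  if hne : (zzsep r U g h).Nonempty then
    (IsWellFounded.wf (r := (WellOrderingRel : zzLam r → zzLam r → Prop))).min _ hne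
  else ⟨id, hrefl⟩

private def zzleS (hrefl : ∀ x, r x x) (g h : G) : Prop :=
  zzsep r U g h = ∅ ∨ zzltAt r U (zzF0 r U hrefl g h) g h

variable {r}

private theorem zzlinv_iff (hlinv : ∀ g x y, r x y → r (g * x) (g * y)) (k x y : G) :
    r (k * x) (k * y) ↔ r x y := by
  constructor
  · intro h
    have := hlinv k⁻¹ _ _ h
    simpa using this
  · exact hlinv k x y

private theorem zzAset_trans (htrans : ∀ x y z, r x y → r y z → r x z) (f : zzLam r) (a b c : G) :
    zzAset r f a b ∩ zzAset r f b c ⊆ zzAset r f a c :=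
  fun _ ht => htrans _ _ _ ht.1 ht.2

private theorem zzAset_mul (hlinv : ∀ g x y, r x y → r (g * x) (g * y))
    (f : zzLam r) (k a b : G) : zzAset r f (k * a) (k * b) = zzAset r f a b := by
  ext t
  simp only [zzAset, Set.mem_setOf_eq, mul_assoc]
  exact zzlinv_iff hlinv k _ _

private theorem zzcompar (htrans : ∀ x y z, r x y → r y z → r x z)
    (hlinv : ∀ g x y, r x y → r (g * x) (g * y))
    (hO6 : ∀ x y z, r y x → r z x → (r y z ∨ r z y))
    (hU : ∀ s, {t | r t s} ∈ U) (f : zzLam r) (a b : G) :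
    zzAset r f a b ∪ zzAset r f b a ∈ U := by
  have h : {t | r t a⁻¹} ∩ {t | r t b⁻¹} ∈ U := Filter.inter_mem (hU a⁻¹) (hU b⁻¹)
  refine Filter.mem_of_superset h ?_
  rintro t ⟨h1, h2⟩
  have ha : r (a * f.1 t) 1 := by
    have := hlinv a _ _ (htrans _ _ _ (f.2 t) h1)
    simpa using this
  have hb : r (b * f.1 t) 1 := by
    have := hlinv b _ _ (htrans _ _ _ (f.2 t) h2)
    simpa using this
  exact hO6 1 _ _ ha hb

private theorem zztrichotAt (htrans : ∀ x y z, r x y → r y z → r x z)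
    (hlinv : ∀ g x y, r x y → r (g * x) (g * y))
    (hO6 : ∀ x y z, r y x → r z x → (r y z ∨ r z y))
    (hU : ∀ s, {t | r t s} ∈ U) (f : zzLam r) (a b : G) :
    zzeqAt r U f a b ∨ zzltAt r U f a b ∨ zzltAt r U f b a := by
  have h := (Ultrafilter.union_mem_iff).1 (zzcompar U htrans hlinv hO6 hU f a b)
  by_cases hA : zzAset r f a b ∈ U <;> by_cases hB : zzAset r f b a ∈ U
  · exact Or.inl ⟨hA, hB⟩
  · exact Or.inr (Or.inl ⟨hA, hB⟩)
  · exact Or.inr (Or.inr ⟨hB, hA⟩)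
  · rcases h with h | h
    · exact absurd h hA
    · exact absurd h hB

private theorem zzeq_symmS {f : zzLam r} {a b : G} (h : zzeqAt r U f a b) : zzeqAt r U f b a :=
  ⟨h.2, h.1⟩

private theorem zzeq_transS (htrans : ∀ x y z, r x y → r y z → r x z) {f : zzLam r} {a b c : G}
    (h1 : zzeqAt r U f a b) (h2 : zzeqAt r U f b c) : zzeqAt r U f a c :=
  ⟨Filter.mem_of_superset (Filter.inter_mem h1.1 h2.1) (zzAset_trans htrans f a b c),
   Filter.mem_of_superset (Filter.inter_mem h2.2 h1.2) (zzAset_trans htrans f c b a)⟩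

private theorem zzlt_transS (htrans : ∀ x y z, r x y → r y z → r x z) {f : zzLam r} {a b c : G}
    (h1 : zzltAt r U f a b) (h2 : zzltAt r U f b c) : zzltAt r U f a c := by
  refine ⟨Filter.mem_of_superset (Filter.inter_mem h1.1 h2.1) (zzAset_trans htrans f a b c),
    fun hc => h2.2 ?_⟩
  exact Filter.mem_of_superset (Filter.inter_mem hc h1.1) (zzAset_trans htrans f c a b)

private theorem zzlt_of_lt_of_eqS (htrans : ∀ x y z, r x y → r y z → r x z) {f : zzLam r} {a b c : G}
    (h1 : zzltAt r U f a b) (h2 : zzeqAt r U f b c) : zzltAt r U f a c := by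
  refine ⟨Filter.mem_of_superset (Filter.inter_mem h1.1 h2.1) (zzAset_trans htrans f a b c),
    fun hc => h1.2 ?_⟩
  exact Filter.mem_of_superset (Filter.inter_mem h2.1 hc) (zzAset_trans htrans f b c a)

private theorem zzlt_of_eq_of_ltS (htrans : ∀ x y z, r x y → r y z → r x z) {f : zzLam r} {a b c : G}
    (h1 : zzeqAt r U f a b) (h2 : zzltAt r U f b c) : zzltAt r U f a c := by
  refine ⟨Filter.mem_of_superset (Filter.inter_mem h1.1 h2.1) (zzAset_trans htrans f a b c),
    fun hc => h2.2 ?_⟩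
  exact Filter.mem_of_superset (Filter.inter_mem hc h1.1) (zzAset_trans htrans f c a b)

private theorem zzlt_not_eqS {f : zzLam r} {a b : G} (h : zzltAt r U f a b) : ¬ zzeqAt r U f a b :=
  fun he => h.2 he.2

private theorem zzlt_asymmS {f : zzLam r} {a b : G} (h : zzltAt r U f a b) : ¬ zzltAt r U f b a :=
  fun he => h.2 he.1

private theorem zzsep_symm (a b : G) : zzsep r U a b = zzsep r U b a :=
  Set.ext fun f => not_congr ⟨zzeq_symmS U, zzeq_symmS U⟩

private theorem zzF0_symm (hrefl : ∀ x, r x x) (a b : G) :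
    zzF0 r U hrefl a b = zzF0 r U hrefl b a := by
  rw [zzF0, zzF0, zzsep_symm]

private theorem zzF0_mem (hrefl : ∀ x, r x x) {g h : G} (hne : (zzsep r U g h).Nonempty) :
    zzF0 r U hrefl g h ∈ zzsep r U g h ∧
      ∀ f ∈ zzsep r U g h, ¬ WellOrderingRel f (zzF0 r U hrefl g h) := by
  have e : zzF0 r U hrefl g h =
      (IsWellFounded.wf (r := (WellOrderingRel : zzLam r → zzLam r → Prop))).min _ hne := by
    unfold zzF0; exact dif_pos hne
  rw [e]
  exact ⟨WellFounded.min_mem _ _ hne, fun f hf => WellFounded.not_lt_min _ _ hf⟩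

private theorem zzF0_eq (hrefl : ∀ x, r x x) {g h : G} {m : zzLam r} (hm : m ∈ zzsep r U g h)
    (hmin : ∀ f, WellOrderingRel f m → f ∉ zzsep r U g h) : zzF0 r U hrefl g h = m := by
  have hne : (zzsep r U g h).Nonempty := ⟨m, hm⟩
  obtain ⟨h1, h2⟩ := zzF0_mem U hrefl hne
  rcases trichotomous_of WellOrderingRel (zzF0 r U hrefl g h) m with ht | ht | ht
  · exact absurd h1 (hmin _ ht)
  · exact ht
  · exact absurd ht (h2 m hm)

private theorem zzeqAt_refl (hrefl : ∀ x, r x x) (f : zzLam r) (a : G) : zzeqAt r U f a a := by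
  have : zzAset r f a a ∈ U :=
    Filter.mem_of_superset Filter.univ_mem (fun t _ => hrefl _)
  exact ⟨this, this⟩

private theorem zzsep_self (hrefl : ∀ x, r x x) (a : G) : zzsep r U a a = ∅ :=
  Set.eq_empty_iff_forall_notMem.2 fun f hf => hf (zzeqAt_refl U hrefl f a)

private theorem zzleS_refl (hrefl : ∀ x, r x x) (a : G) : zzleS r U hrefl a a :=
  Or.inl (zzsep_self U hrefl a)

private theorem zzleS_total (hrefl : ∀ x, r x x) (htrans : ∀ x y z, r x y → r y z → r x z)
    (hlinv : ∀ g x y, r x y → r (g * x) (g * y))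
    (hO6 : ∀ x y z, r y x → r z x → (r y z ∨ r z y))
    (hU : ∀ s, {t | r t s} ∈ U) (a b : G) :
    zzleS r U hrefl a b ∨ zzleS r U hrefl b a := by
  by_cases hs : zzsep r U a b = ∅
  · exact Or.inl (Or.inl hs)
  · have hne : (zzsep r U a b).Nonempty := Set.nonempty_iff_ne_empty.2 hs
    have hmem := (zzF0_mem U hrefl hne).1
    rcases zztrichotAt U htrans hlinv hO6 hU (zzF0 r U hrefl a b) a b with he | hl | hl
    · exact absurd he hmem
    · exact Or.inl (Or.inr hl)
    · refine Or.inr (Or.inr ?_)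
      rw [zzF0_symm U hrefl b a]
      exact hl

private theorem zzleS_antisymm (hrefl : ∀ x, r x x) {a b : G}
    (h1 : zzleS r U hrefl a b) (h2 : zzleS r U hrefl b a) : zzsep r U a b = ∅ := by
  rcases h1 with h1 | h1
  · exact h1
  rcases h2 with h2 | h2
  · rw [zzsep_symm]; exact h2
  rw [zzF0_symm U hrefl b a] at h2
  exact absurd h2 (zzlt_asymmS U h1)

private theorem zzsep_empty_iff (a b : G) :
    zzsep r U a b = ∅ ↔ ∀ f : zzLam r, zzeqAt r U f a b := by
  rw [Set.eq_empty_iff_forall_notMem]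
  exact forall_congr' fun f => not_not

private theorem zzleS_congr_left (hrefl : ∀ x, r x x) (htrans : ∀ x y z, r x y → r y z → r x z)
    {a a' : G} (ha : ∀ f : zzLam r, zzeqAt r U f a a') (b : G) :
    zzleS r U hrefl a b ↔ zzleS r U hrefl a' b := by
  have hsep : zzsep r U a b = zzsep r U a' b := by
    ext f
    exact not_congr ⟨fun e => zzeq_transS U htrans (zzeq_symmS U (ha f)) e,
      fun e => zzeq_transS U htrans (ha f) e⟩
  have hF : zzF0 r U hrefl a b = zzF0 r U hrefl a' b := by rw [zzF0, zzF0, hsep]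
  unfold zzleS
  rw [hsep, hF]
  exact or_congr Iff.rfl
    ⟨fun l => zzlt_of_eq_of_ltS U htrans (zzeq_symmS U (ha _)) l,
     fun l => zzlt_of_eq_of_ltS U htrans (ha _) l⟩

private theorem zzleS_congr_right (hrefl : ∀ x, r x x) (htrans : ∀ x y z, r x y → r y z → r x z)
    {b b' : G} (hb : ∀ f : zzLam r, zzeqAt r U f b b') (a : G) :
    zzleS r U hrefl a b ↔ zzleS r U hrefl a b' := by
  have hsep : zzsep r U a b = zzsep r U a b' := by
    ext f
    exact not_congr ⟨fun e => zzeq_transS U htrans e (hb f),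
      fun e => zzeq_transS U htrans e (zzeq_symmS U (hb f))⟩
  have hF : zzF0 r U hrefl a b = zzF0 r U hrefl a b' := by rw [zzF0, zzF0, hsep]
  unfold zzleS
  rw [hsep, hF]
  exact or_congr Iff.rfl
    ⟨fun l => zzlt_of_lt_of_eqS U htrans l (hb _),
     fun l => zzlt_of_lt_of_eqS U htrans l (zzeq_symmS U (hb _))⟩

private theorem zzleS_trans (hrefl : ∀ x, r x x) (htrans : ∀ x y z, r x y → r y z → r x z)
    {a b c : G} (h1 : zzleS r U hrefl a b) (h2 : zzleS r U hrefl b c) : zzleS r U hrefl a c := by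
  by_cases hab : zzsep r U a b = ∅
  · exact (zzleS_congr_left U hrefl htrans ((zzsep_empty_iff U a b).1 hab) c).2 h2
  by_cases hbc : zzsep r U b c = ∅
  · exact (zzleS_congr_right U hrefl htrans ((zzsep_empty_iff U b c).1 hbc) a).1 h1
  have hl1 : zzltAt r U (zzF0 r U hrefl a b) a b := h1.resolve_left hab
  have hl2 : zzltAt r U (zzF0 r U hrefl b c) b c := h2.resolve_left hbc
  have hne1 : (zzsep r U a b).Nonempty := Set.nonempty_iff_ne_empty.2 hab
  have hne2 : (zzsep r U b c).Nonempty := Set.nonempty_iff_ne_empty.2 hbc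
  obtain ⟨hm1, hmin1⟩ := zzF0_mem U hrefl hne1
  obtain ⟨hm2, hmin2⟩ := zzF0_mem U hrefl hne2
  set f₁ := zzF0 r U hrefl a b with hf₁
  set f₂ := zzF0 r U hrefl b c with hf₂
  have key : ∀ f : zzLam r, WellOrderingRel f f₁ → WellOrderingRel f f₂ →
      zzeqAt r U f a c := by
    intro f hw1 hw2
    have e1 : zzeqAt r U f a b := not_not.1 fun hn => hmin1 f hn hw1
    have e2 : zzeqAt r U f b c := not_not.1 fun hn => hmin2 f hn hw2
    exact zzeq_transS U htrans e1 e2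
  rcases trichotomous_of WellOrderingRel f₁ f₂ with hw | he | hw
  · -- f₁ comes first; at f₁, b and c agree
    have he2 : zzeqAt r U f₁ b c := not_not.1 fun hn => hmin2 f₁ hn hw
    have hlt : zzltAt r U f₁ a c := zzlt_of_lt_of_eqS U htrans hl1 he2
    have hF : zzF0 r U hrefl a c = f₁ := by
      refine zzF0_eq U hrefl (zzlt_not_eqS U hlt) fun f hwf => ?_
      intro hf
      exact hf (key f hwf (_root_.trans hwf hw))
    exact Or.inr (hF ▸ hlt)
  · have hlt : zzltAt r U f₁ a c := zzlt_transS U htrans hl1 (he ▸ hl2)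
    have hF : zzF0 r U hrefl a c = f₁ := by
      refine zzF0_eq U hrefl (zzlt_not_eqS U hlt) fun f hwf => ?_
      intro hf
      exact hf (key f hwf (he ▸ hwf))
    exact Or.inr (hF ▸ hlt)
  · -- f₂ comes first; at f₂, a and b agree
    have he1 : zzeqAt r U f₂ a b := not_not.1 fun hn => hmin1 f₂ hn hw
    have hlt : zzltAt r U f₂ a c := zzlt_of_eq_of_ltS U htrans he1 hl2
    have hF : zzF0 r U hrefl a c = f₂ := by
      refine zzF0_eq U hrefl (zzlt_not_eqS U hlt) fun f hwf => ?_
      intro hf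
      exact hf (key f (_root_.trans hwf hw) hwf)
    exact Or.inr (hF ▸ hlt)

private theorem zzleS_mul (hrefl : ∀ x, r x x) (hlinv : ∀ g x y, r x y → r (g * x) (g * y))
    (k a b : G) : zzleS r U hrefl (k * a) (k * b) ↔ zzleS r U hrefl a b := by
  have heq : ∀ f : zzLam r, zzeqAt r U f (k * a) (k * b) ↔ zzeqAt r U f a b := by
    intro f
    unfold zzeqAt
    rw [zzAset_mul hlinv, zzAset_mul hlinv]
  have hsep : zzsep r U (k * a) (k * b) = zzsep r U a b :=
    Set.ext fun f => not_congr (heq f)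
  have hF : zzF0 r U hrefl (k * a) (k * b) = zzF0 r U hrefl a b := by rw [zzF0, zzF0, hsep]
  unfold zzleS
  rw [hsep, hF]
  unfold zzltAt
  rw [zzAset_mul hlinv, zzAset_mul hlinv]

end Stmt10Aux

theorem stmt_10 {G : Type*} [Group G] (r : G → G → Prop)
    (hrefl : ∀ x, r x x)
    (htrans : ∀ x y z, r x y → r y z → r x z)
    (hlinv : ∀ g x y, r x y → r (g * x) (g * y))
    (hO6 : ∀ x y z, r y x → r z x → (r y z ∨ r z y))
    (hO7 : ∀ x y, ∃ z, r z x ∧ r z y)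
    (N : Subgroup G) [N.Normal]
    (hN : (N : Set G) = {x : G | ∃ p : G, r 1 p ∧
      ∀ q : G, r q⁻¹ p⁻¹ → ∃ h : G, (r 1 h ∧ r 1 h⁻¹) ∧ x = q⁻¹ * h * q}) :
    ∃ lin : LinearOrder (G ⧸ N),
      ∀ g x y : G ⧸ N, lin.le x y → lin.le (g * x) (g * y) := by
  classical
  -- characterization of N
  have hNc : ∀ x : G, x ∈ N ↔ ∃ s : G, ∀ u, r u s → r u (x * u) ∧ r (x * u) u := by
    intro x
    have hmem : x ∈ N ↔ x ∈ (N : Set G) := Iff.rfl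
    rw [hmem, hN]
    constructor
    · rintro ⟨p, hp, hq⟩
      refine ⟨p⁻¹, fun u hu => ?_⟩
      obtain ⟨h0, ⟨h01, h02⟩, hx⟩ := hq u⁻¹ (by simpa using hu)
      rw [inv_inv] at hx
      constructor
      · have := hlinv u _ _ h01
        rw [mul_one] at this
        have hxu : x * u = u * h0 := by rw [hx]; group
        rw [hxu]; exact this
      · have := hlinv (u * h0) _ _ h02
        rw [mul_one, mul_assoc, mul_inv_cancel, mul_one] at this
        have hxu : x * u = u * h0 := by rw [hx]; group
        rw [hxu]; exact this
    · rintro ⟨s, hs⟩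
      obtain ⟨w, hws, hw1⟩ := hO7 s 1
      refine ⟨w⁻¹, ?_, fun q hq => ?_⟩
      · have := hlinv w⁻¹ _ _ hw1
        rw [inv_mul_cancel, mul_one] at this
        exact this
      · rw [inv_inv] at hq
        have hqs : r q⁻¹ s := htrans _ _ _ hq hws
        obtain ⟨hu1, hu2⟩ := hs q⁻¹ hqs
        refine ⟨q * x * q⁻¹, ⟨?_, ?_⟩, by group⟩
        · have := hlinv q _ _ hu1
          rw [mul_inv_cancel] at this
          rw [mul_assoc]
          exact this
        · have := hlinv (q * x⁻¹) _ _ hu2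
          rw [show q * x⁻¹ * (x * q⁻¹) = 1 by group] at this
          rw [show (q * x * q⁻¹)⁻¹ = q * x⁻¹ * q⁻¹ by group, mul_assoc]
          rw [mul_assoc] at this
          exact this
  -- the filter of downward cones and an ultrafilter refining it
  have hO7' := hO7
  let F : Filter G :=
    { sets := {A | ∃ s, ∀ t, r t s → t ∈ A}
      univ_sets := ⟨1, fun t _ => trivial⟩
      sets_of_superset := fun hA hAB => by
        obtain ⟨s, hs⟩ := hA
        exact ⟨s, fun t ht => hAB (hs t ht)⟩
      inter_sets := fun hA hB => by
        obtain ⟨s1, h1⟩ := hA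
        obtain ⟨s2, h2⟩ := hB
        obtain ⟨z, hz1, hz2⟩ := hO7 s1 s2
        exact ⟨z, fun t ht => ⟨h1 t (htrans _ _ _ ht hz1), h2 t (htrans _ _ _ ht hz2)⟩⟩ }
  have hFne : F.NeBot := by
    rw [← Filter.forall_mem_nonempty_iff_neBot]
    rintro A ⟨s, hs⟩
    exact ⟨s, hs s (hrefl s)⟩
  let U : Ultrafilter G := @Ultrafilter.of _ F hFne
  have hU : ∀ s, {t | r t s} ∈ U := fun s =>
    (@Ultrafilter.of_le _ F hFne) (show {t | r t s} ∈ F from ⟨s, fun t ht => ht⟩)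
  -- the kernel of the zzcomparison is exactly N
  have ker_char : ∀ a b : G, (∀ f : zzLam r, zzeqAt r U f a b) ↔ a⁻¹ * b ∈ N := by
    intro a b
    rw [hNc]
    constructor
    · intro hf
      by_contra hcon
      push_neg at hcon
      choose u hu1 hu2 using hcon
      set f : zzLam r := ⟨u, hu1⟩ with hfdef
      obtain ⟨e1, e2⟩ := hf f
      obtain ⟨t, ht1, ht2⟩ := Ultrafilter.nonempty_of_mem (Filter.inter_mem e1 e2)
      have ht1' : r (a * u t) (b * u t) := ht1
      have ht2' : r (b * u t) (a * u t) := ht2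
      have p1 : r (u t) (a⁻¹ * b * u t) := by
        have := hlinv a⁻¹ _ _ ht1'
        rw [inv_mul_cancel_left] at this
        rw [mul_assoc]
        exact this
      have p2 : r (a⁻¹ * b * u t) (u t) := by
        have := hlinv a⁻¹ _ _ ht2'
        rw [inv_mul_cancel_left] at this
        rw [mul_assoc]
        exact this
      exact hu2 t p1 p2
    · rintro ⟨s, hs⟩ f
      have hsub : {t | r t s} ⊆ zzAset r f a b ∩ zzAset r f b a := by
        intro t ht
        have hfs : r (f.1 t) s := htrans _ _ _ (f.2 t) ht
        obtain ⟨h1, h2⟩ := hs _ hfs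
        constructor
        · have := hlinv a _ _ h1
          rw [show a * (a⁻¹ * b * f.1 t) = b * f.1 t by group] at this
          exact this
        · have := hlinv a _ _ h2
          rw [show a * (a⁻¹ * b * f.1 t) = b * f.1 t by group] at this
          exact this
      have hmem := Filter.mem_of_superset (hU s) hsub
      exact ⟨Filter.mem_of_superset hmem Set.inter_subset_left,
             Filter.mem_of_superset hmem Set.inter_subset_right⟩
  have hcongr : ∀ a b : G, a⁻¹ * b ∈ N → ∀ f : zzLam r, zzeqAt r U f a b :=
    fun a b h => (ker_char a b).2 h
  -- lift zzleS to the quotient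
  let L : G ⧸ N → G ⧸ N → Prop := fun x y =>
    Quotient.liftOn₂' x y (zzleS r U hrefl) (by
      intro a₁ b₁ a₂ b₂ ha hb
      have ha' : a₁⁻¹ * a₂ ∈ N := QuotientGroup.leftRel_apply.mp ha
      have hb' : b₁⁻¹ * b₂ ∈ N := QuotientGroup.leftRel_apply.mp hb
      apply propext
      calc zzleS r U hrefl a₁ b₁ ↔ zzleS r U hrefl a₂ b₁ :=
            zzleS_congr_left U hrefl htrans (hcongr _ _ ha') b₁
        _ ↔ zzleS r U hrefl a₂ b₂ :=
            zzleS_congr_right U hrefl htrans (hcongr _ _ hb') a₂)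
  have hL : ∀ a b : G, L (QuotientGroup.mk a) (QuotientGroup.mk b) = zzleS r U hrefl a b :=
    fun a b => rfl
  refine ⟨{ le := L
            lt := fun x y => L x y ∧ ¬ L y x
            le_refl := fun x => Quotient.inductionOn' x fun a => zzleS_refl U hrefl a
            le_trans := fun x y z => Quotient.inductionOn₃' x y z fun a b c h1 h2 =>
              zzleS_trans U hrefl htrans h1 h2
            lt_iff_le_not_ge := fun _ _ => Iff.rfl
            le_antisymm := fun x y => Quotient.inductionOn₂' x y fun a b h1 h2 => by
              have hsep := zzleS_antisymm U hrefl h1 h2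
              have hab : a⁻¹ * b ∈ N := (ker_char a b).1 ((zzsep_empty_iff U a b).1 hsep)
              exact Quotient.sound' (QuotientGroup.leftRel_apply.mpr hab)
            le_total := fun x y => Quotient.inductionOn₂' x y fun a b =>
              zzleS_total U hrefl htrans hlinv hO6 hU a b
            toDecidableLE := fun _ _ => Classical.dec _ }, ?_⟩
  intro g x y
  refine QuotientGroup.induction_on g fun k => ?_
  refine QuotientGroup.induction_on x fun a => ?_
  refine QuotientGroup.induction_on y fun b => ?_
  rw [← QuotientGroup.mk_mul, ← QuotientGroup.mk_mul]
  show zzleS r U hrefl a b → zzleS r U hrefl (k * a) (k * b)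
  exact fun h => (zzleS_mul U hrefl hlinv k a b).2 h
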